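/- arXiv:2305.04918 — 2 statements merged into one kernel-verified Lean document; each statement's English description precedes it below -/
import Mathlib

section
/- Let φ be a 3CNF formula with n ≥ 4 variables and ε = 1/(2n³). If φ is unsatisfiable, then in every ε-Nash equilibrium (x, y) of the game G(φ), both players play the strategy f with probability greater than 1 − ε, i.e. x_f > 1 − ε and y_f > 1 − ε. -/
open Finset

/-- The probability simplex over a finite strategy set `S`. -/
def simplex (S : Type*) [Fintype S] : Set (S → ℝ) :=
  {x | (∀ i, 0 ≤ x i) ∧ ∑ i, x i = 1}

/-- Expected payoff `Σᵢⱼ xᵢ yⱼ A i j`. -/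
def payoff {S : Type*} [Fintype S] (A : S → S → ℝ) (x y : S → ℝ) : ℝ :=
  ∑ i, ∑ j, x i * y j * A i j

/-- The point mass at pure strategy `s`. -/
def pureStrat {S : Type*} [DecidableEq S] (s : S) : S → ℝ :=
  fun i => if i = s then 1 else 0

/-- Support of a mixed strategy. -/
def supp {S : Type*} (x : S → ℝ) : Set S := {i | 0 < x i}

/-- L1 distance between mixed strategies. -/
def dist1 {S : Type*} [Fintype S] (x y : S → ℝ) : ℝ := ∑ i, |x i - y i|

/-- `(x, y)` is an ε-Nash equilibrium of the bi-matrix game `(R, C)`. -/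
def IsEpsNash {S : Type*} [Fintype S] [DecidableEq S]
    (R C : S → S → ℝ) (x y : S → ℝ) (ε : ℝ) : Prop :=
  x ∈ simplex S ∧ y ∈ simplex S ∧
  (∀ s : S, payoff R (pureStrat s) y ≤ payoff R x y + ε) ∧
  (∀ s : S, payoff C x (pureStrat s) ≤ payoff C x y + ε)

/-- A literal over `n` variables: a variable together with a sign
(`true` = the positive literal, `false` = the negated literal). -/
abbrev Lit (n : ℕ) := Fin n × Bool

/-- Negation of a literal. -/
def negLit {n : ℕ} (l : Lit n) : Lit n := (l.1, !l.2)

/-- A 3CNF formula with `n` variables and `m` clauses; each clause is a set of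
exactly 3 literals. -/
structure CNF3 (n m : ℕ) where
  clause : Fin m → Finset (Lit n)
  card3 : ∀ c, (clause c).card = 3

/-- An assignment `a` satisfies a clause if some literal of the clause is true under `a`. -/
def SatAssign {n m : ℕ} (φ : CNF3 n m) (a : Fin n → Bool) : Prop :=
  ∀ c, ∃ l ∈ φ.clause c, a l.1 = l.2

/-- Satisfiability of a 3CNF formula. -/
def CNF3.Satisfiable {n m : ℕ} (φ : CNF3 n m) : Prop :=
  ∃ a : Fin n → Bool, SatAssign φ a

/-- Strategy set of the game `G(φ)`: two copies `L₁`, `L₂` of the literals,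
then the variables, the clauses, and the special strategy `f`. -/
abbrev GStrat (n m : ℕ) := Lit n ⊕ (Lit n ⊕ (Fin n ⊕ (Fin m ⊕ Unit)))

/-- The special strategy `f` of the game `G(φ)`. -/
def fStrat (n m : ℕ) : GStrat n m := Sum.inr (Sum.inr (Sum.inr (Sum.inr ())))

/-- The row player's payoff in the game `G(φ)`. -/
def gU1 {n m : ℕ} (φ : CNF3 n m) : GStrat n m → GStrat n m → ℝ
  | Sum.inr (Sum.inl _), _ => -2 * (n : ℝ)
  | Sum.inr (Sum.inr (Sum.inr (Sum.inr _))),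
      Sum.inr (Sum.inr (Sum.inr (Sum.inr _))) => 2 * (n : ℝ)
  | Sum.inr (Sum.inr (Sum.inr (Sum.inr _))), _ => (n : ℝ) - 1
  | _, Sum.inr (Sum.inr (Sum.inr (Sum.inr _))) => 0
  | _, Sum.inl _ => 0
  | Sum.inl a, Sum.inr (Sum.inl b) =>
      if a = negLit b then (n : ℝ) - 4 else (n : ℝ) - 1
  | Sum.inl _, _ => (n : ℝ) - 4
  | Sum.inr (Sum.inr (Sum.inl w)), Sum.inr (Sum.inl l) =>
      if l.1 = w then 0 else (n : ℝ)
  | Sum.inr (Sum.inr (Sum.inl _)), _ => (n : ℝ) - 4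
  | Sum.inr (Sum.inr (Sum.inr (Sum.inl c))), Sum.inr (Sum.inl l) =>
      if l ∈ φ.clause c then 0 else (n : ℝ)
  | Sum.inr (Sum.inr (Sum.inr (Sum.inl _))), _ => (n : ℝ) - 4

/-- The column player's payoff in the game `G(φ)`. -/
def gU2 {n m : ℕ} (φ : CNF3 n m) : GStrat n m → GStrat n m → ℝ
  | _, Sum.inl _ => -2 * (n : ℝ)
  | Sum.inr (Sum.inr (Sum.inr (Sum.inr _))),
      Sum.inr (Sum.inr (Sum.inr (Sum.inr _))) => 2 * (n : ℝ)
  | _, Sum.inr (Sum.inr (Sum.inr (Sum.inr _))) => (n : ℝ) - 1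
  | Sum.inr (Sum.inr (Sum.inr (Sum.inr _))), _ => 0
  | Sum.inr (Sum.inl _), _ => 0
  | Sum.inl a, Sum.inr (Sum.inl b) =>
      if a = negLit b then (n : ℝ) - 4 else (n : ℝ) - 1
  | _, Sum.inr (Sum.inl _) => (n : ℝ) - 4
  | Sum.inl a, Sum.inr (Sum.inr (Sum.inl w)) =>
      if a.1 = w then 0 else (n : ℝ)
  | _, Sum.inr (Sum.inr (Sum.inl _)) => (n : ℝ) - 4
  | Sum.inl a, Sum.inr (Sum.inr (Sum.inr (Sum.inl c))) =>
      if a ∈ φ.clause c then 0 else (n : ℝ)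
  | _, Sum.inr (Sum.inr (Sum.inr (Sum.inl _))) => (n : ℝ) - 4

namespace S18

variable {n m : ℕ}

def l1 (a : Lit n) : GStrat n m := Sum.inl a
def l2 (a : Lit n) : GStrat n m := Sum.inr (Sum.inl a)
def vS (w : Fin n) : GStrat n m := Sum.inr (Sum.inr (Sum.inl w))
def cS (c : Fin m) : GStrat n m := Sum.inr (Sum.inr (Sum.inr (Sum.inl c)))

lemma negLit_negLit (a : Lit n) : negLit (negLit a) = a := by
  simp [negLit]

lemma negLit_comm {a b : Lit n} : a = negLit b ↔ b = negLit a := by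
  constructor <;> (rintro rfl; simp [negLit])

lemma sum_gstrat (h : GStrat n m → ℝ) :
    ∑ i, h i = (∑ a : Lit n, h (l1 a)) + (∑ a : Lit n, h (l2 a)) +
      (∑ w : Fin n, h (vS w)) + (∑ c : Fin m, h (cS c)) + h (fStrat n m) := by
  simp only [Fintype.sum_sum_type, Finset.univ_unique, Finset.sum_singleton]
  show _ + (_ + (_ + (_ + _))) = _
  ring_nf
  rfl



/-! payoff reformulations -/

lemma payoff_rowform {S : Type*} [Fintype S] (A : S → S → ℝ) (x y : S → ℝ) :
    payoff A x y = ∑ i, x i * ∑ j, y j * A i j := by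
  unfold payoff
  refine Finset.sum_congr rfl fun i _ => ?_
  rw [Finset.mul_sum]
  refine Finset.sum_congr rfl fun j _ => by ring

lemma payoff_colform {S : Type*} [Fintype S] (A : S → S → ℝ) (x y : S → ℝ) :
    payoff A x y = ∑ j, y j * ∑ i, x i * A i j := by
  unfold payoff
  rw [Finset.sum_comm]
  refine Finset.sum_congr rfl fun j _ => ?_
  rw [Finset.mul_sum]
  refine Finset.sum_congr rfl fun i _ => by ring

lemma payoff_pure_left {S : Type*} [Fintype S] [DecidableEq S] (A : S → S → ℝ)
    (s : S) (y : S → ℝ) : payoff A (pureStrat s) y = ∑ j, y j * A s j := by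
  rw [payoff_rowform]
  rw [Finset.sum_eq_single s]
  · simp [pureStrat]
  · intro i _ hi; simp [pureStrat, hi]
  · intro h; exact absurd (Finset.mem_univ s) h

lemma payoff_pure_right {S : Type*} [Fintype S] [DecidableEq S] (A : S → S → ℝ)
    (x : S → ℝ) (t : S) : payoff A x (pureStrat t) = ∑ i, x i * A i t := by
  rw [payoff_colform]
  rw [Finset.sum_eq_single t]
  · simp [pureStrat]
  · intro j _ hj; simp [pureStrat, hj]
  · intro h; exact absurd (Finset.mem_univ t) h

/-! matrix entry evaluation -/

section EntryLemmas
variable (φ : CNF3 n m) (a b : Lit n) (w : Fin n) (c : Fin m)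

@[simp] lemma gU1_l1_l1 : gU1 φ (l1 a) (l1 b : GStrat n m) = 0 := rfl
@[simp] lemma gU1_l1_l2 : gU1 φ (l1 a) (l2 b : GStrat n m) =
    if a = negLit b then (n : ℝ) - 4 else (n : ℝ) - 1 := rfl
@[simp] lemma gU1_l1_v : gU1 φ (l1 a) (vS w : GStrat n m) = (n : ℝ) - 4 := rfl
@[simp] lemma gU1_l1_c : gU1 φ (l1 a) (cS c : GStrat n m) = (n : ℝ) - 4 := rfl
@[simp] lemma gU1_l1_f : gU1 φ (l1 a) (fStrat n m) = 0 := rfl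

@[simp] lemma gU1_l2_l1 : gU1 φ (l2 a) (l1 b : GStrat n m) = -2 * (n : ℝ) := rfl
@[simp] lemma gU1_l2_l2 : gU1 φ (l2 a) (l2 b : GStrat n m) = -2 * (n : ℝ) := rfl
@[simp] lemma gU1_l2_v : gU1 φ (l2 a) (vS w : GStrat n m) = -2 * (n : ℝ) := rfl
@[simp] lemma gU1_l2_c : gU1 φ (l2 a) (cS c : GStrat n m) = -2 * (n : ℝ) := rfl
@[simp] lemma gU1_l2_f : gU1 φ (l2 a) (fStrat n m) = -2 * (n : ℝ) := rfl

@[simp] lemma gU1_v_l1 : gU1 φ (vS w) (l1 b : GStrat n m) = 0 := rfl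
@[simp] lemma gU1_v_l2 : gU1 φ (vS w) (l2 b : GStrat n m) =
    if b.1 = w then 0 else (n : ℝ) := rfl
@[simp] lemma gU1_v_v (w' : Fin n) : gU1 φ (vS w) (vS w' : GStrat n m) = (n : ℝ) - 4 := rfl
@[simp] lemma gU1_v_c : gU1 φ (vS w) (cS c : GStrat n m) = (n : ℝ) - 4 := rfl
@[simp] lemma gU1_v_f : gU1 φ (vS w) (fStrat n m) = 0 := rfl

@[simp] lemma gU1_c_l1 : gU1 φ (cS c) (l1 b : GStrat n m) = 0 := rfl
@[simp] lemma gU1_c_l2 : gU1 φ (cS c) (l2 b : GStrat n m) =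
    if b ∈ φ.clause c then 0 else (n : ℝ) := rfl
@[simp] lemma gU1_c_v : gU1 φ (cS c) (vS w : GStrat n m) = (n : ℝ) - 4 := rfl
@[simp] lemma gU1_c_c (c' : Fin m) : gU1 φ (cS c) (cS c' : GStrat n m) = (n : ℝ) - 4 := rfl
@[simp] lemma gU1_c_f : gU1 φ (cS c) (fStrat n m) = 0 := rfl

@[simp] lemma gU1_f_l1 : gU1 φ (fStrat n m) (l1 b) = (n : ℝ) - 1 := rfl
@[simp] lemma gU1_f_l2 : gU1 φ (fStrat n m) (l2 b) = (n : ℝ) - 1 := rfl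
@[simp] lemma gU1_f_v : gU1 φ (fStrat n m) (vS w) = (n : ℝ) - 1 := rfl
@[simp] lemma gU1_f_c : gU1 φ (fStrat n m) (cS c) = (n : ℝ) - 1 := rfl
@[simp] lemma gU1_f_f : gU1 φ (fStrat n m) (fStrat n m) = 2 * (n : ℝ) := rfl

@[simp] lemma gU2_l1_l1 : gU2 φ (l1 a) (l1 b : GStrat n m) = -2 * (n : ℝ) := rfl
@[simp] lemma gU2_l2_l1 : gU2 φ (l2 a) (l1 b : GStrat n m) = -2 * (n : ℝ) := rfl
@[simp] lemma gU2_v_l1 : gU2 φ (vS w) (l1 b : GStrat n m) = -2 * (n : ℝ) := rfl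
@[simp] lemma gU2_c_l1 : gU2 φ (cS c) (l1 b : GStrat n m) = -2 * (n : ℝ) := rfl
@[simp] lemma gU2_f_l1 : gU2 φ (fStrat n m) (l1 b) = -2 * (n : ℝ) := rfl

@[simp] lemma gU2_l1_l2 : gU2 φ (l1 a) (l2 b : GStrat n m) =
    if a = negLit b then (n : ℝ) - 4 else (n : ℝ) - 1 := rfl
@[simp] lemma gU2_l2_l2 : gU2 φ (l2 a) (l2 b : GStrat n m) = 0 := rfl
@[simp] lemma gU2_v_l2 : gU2 φ (vS w) (l2 b : GStrat n m) = (n : ℝ) - 4 := rfl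
@[simp] lemma gU2_c_l2 : gU2 φ (cS c) (l2 b : GStrat n m) = (n : ℝ) - 4 := rfl
@[simp] lemma gU2_f_l2 : gU2 φ (fStrat n m) (l2 b) = 0 := rfl

@[simp] lemma gU2_l1_v : gU2 φ (l1 a) (vS w : GStrat n m) =
    if a.1 = w then 0 else (n : ℝ) := rfl
@[simp] lemma gU2_l2_v : gU2 φ (l2 a) (vS w : GStrat n m) = 0 := rfl
@[simp] lemma gU2_v_v (w' : Fin n) : gU2 φ (vS w) (vS w' : GStrat n m) = (n : ℝ) - 4 := rfl
@[simp] lemma gU2_c_v : gU2 φ (cS c) (vS w : GStrat n m) = (n : ℝ) - 4 := rfl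
@[simp] lemma gU2_f_v : gU2 φ (fStrat n m) (vS w) = 0 := rfl

@[simp] lemma gU2_l1_c : gU2 φ (l1 a) (cS c : GStrat n m) =
    if a ∈ φ.clause c then 0 else (n : ℝ) := rfl
@[simp] lemma gU2_l2_c : gU2 φ (l2 a) (cS c : GStrat n m) = 0 := rfl
@[simp] lemma gU2_v_c : gU2 φ (vS w) (cS c : GStrat n m) = (n : ℝ) - 4 := rfl
@[simp] lemma gU2_c_c (c' : Fin m) : gU2 φ (cS c) (cS c' : GStrat n m) = (n : ℝ) - 4 := rfl
@[simp] lemma gU2_f_c : gU2 φ (fStrat n m) (cS c) = 0 := rfl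

@[simp] lemma gU2_l1_f : gU2 φ (l1 a) (fStrat n m) = (n : ℝ) - 1 := rfl
@[simp] lemma gU2_l2_f : gU2 φ (l2 a) (fStrat n m) = (n : ℝ) - 1 := rfl
@[simp] lemma gU2_v_f : gU2 φ (vS w) (fStrat n m) = (n : ℝ) - 1 := rfl
@[simp] lemma gU2_c_f : gU2 φ (cS c) (fStrat n m) = (n : ℝ) - 1 := rfl
@[simp] lemma gU2_f_f : gU2 φ (fStrat n m) (fStrat n m) = 2 * (n : ℝ) := rfl

end EntryLemmas


/-! masses and aggregated quantities -/

variable (φ : CNF3 n m)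

def mL1 (z : GStrat n m → ℝ) : ℝ := ∑ a : Lit n, z (l1 a)
def mL2 (z : GStrat n m → ℝ) : ℝ := ∑ a : Lit n, z (l2 a)
def mV (z : GStrat n m → ℝ) : ℝ := ∑ w : Fin n, z (vS w)
def mC (z : GStrat n m → ℝ) : ℝ := ∑ c : Fin m, z (cS c)

def Xv (z : GStrat n m → ℝ) (w : Fin n) : ℝ := ∑ b : Lit n, if b.1 = w then z (l1 b) else 0
def Yv (z : GStrat n m → ℝ) (w : Fin n) : ℝ := ∑ b : Lit n, if b.1 = w then z (l2 b) else 0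
def Xc (z : GStrat n m → ℝ) (c : Fin m) : ℝ := ∑ b : Lit n, if b ∈ φ.clause c then z (l1 b) else 0
def Yc (z : GStrat n m → ℝ) (c : Fin m) : ℝ := ∑ b : Lit n, if b ∈ φ.clause c then z (l2 b) else 0

def Tc (x y : GStrat n m → ℝ) : ℝ := ∑ b : Lit n, y (l2 b) * x (l1 (negLit b))

/-- row-side form of the conflict sum -/
lemma Tc_rowform (x y : GStrat n m → ℝ) :
    ∑ a : Lit n, x (l1 a) * y (l2 (negLit a)) = Tc x y := by
  unfold Tc
  refine Fintype.sum_bijective negLit (Function.Involutive.bijective negLit_negLit) _ _ ?_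
  intro a
  rw [negLit_negLit]
  ring

/-! row values -/

def rv (s : GStrat n m) (y : GStrat n m → ℝ) : ℝ := ∑ j, y j * gU1 φ s j
def cv (x : GStrat n m → ℝ) (t : GStrat n m) : ℝ := ∑ i, x i * gU2 φ i t

lemma rv_f (y : GStrat n m → ℝ) :
    rv φ (fStrat n m) y = 2 * (n:ℝ) * y (fStrat n m)
      + ((n:ℝ) - 1) * (mL1 y + mL2 y + mV y + mC y) := by
  unfold rv
  rw [sum_gstrat (fun j => y j * gU1 φ (fStrat n m) j)]
  simp only [gU1_f_l1, gU1_f_l2, gU1_f_v, gU1_f_c, gU1_f_f, ← Finset.sum_mul]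
  unfold mL1 mL2 mV mC; ring

lemma rv_l2 (a : Lit n) (y : GStrat n m → ℝ) :
    rv φ (l2 a) y = -2 * (n:ℝ) * (mL1 y + mL2 y + mV y + mC y + y (fStrat n m)) := by
  unfold rv
  rw [sum_gstrat (fun j => y j * gU1 φ (l2 a) j)]
  simp only [gU1_l2_l1, gU1_l2_l2, gU1_l2_v, gU1_l2_c, gU1_l2_f, ← Finset.sum_mul]
  unfold mL1 mL2 mV mC; ring

lemma rv_l1 (a : Lit n) (y : GStrat n m → ℝ) :
    rv φ (l1 a) y = ((n:ℝ) - 1) * mL2 y - 3 * y (l2 (negLit a))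
      + ((n:ℝ) - 4) * (mV y + mC y) := by
  unfold rv
  rw [sum_gstrat (fun j => y j * gU1 φ (l1 a) j)]
  simp only [gU1_l1_l1, gU1_l1_l2, gU1_l1_v, gU1_l1_c, gU1_l1_f, mul_zero,
    Finset.sum_const_zero, ← Finset.sum_mul]
  have h2 : ∑ b : Lit n, y (l2 b) * (if a = negLit b then (n:ℝ) - 4 else (n:ℝ) - 1)
      = ((n:ℝ) - 1) * mL2 y - 3 * y (l2 (negLit a)) := by
    have key : ∀ b : Lit n, y (l2 b) * (if a = negLit b then (n:ℝ) - 4 else (n:ℝ) - 1)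
        = y (l2 b) * ((n:ℝ) - 1) - 3 * (if b = negLit a then y (l2 b) else 0) := by
      intro b
      by_cases h : a = negLit b
      · rw [if_pos h, if_pos (negLit_comm.mp h)]; ring
      · rw [if_neg h, if_neg (fun hb => h (negLit_comm.mpr hb))]; ring
    rw [Finset.sum_congr rfl fun b _ => key b, Finset.sum_sub_distrib,
      ← Finset.sum_mul, ← Finset.mul_sum, Finset.sum_ite_eq' Finset.univ (negLit a)]
    simp [mL2, mul_comm]
  rw [h2]
  unfold mL2 mV mC; ring

lemma rv_v (w : Fin n) (y : GStrat n m → ℝ) :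
    rv φ (vS w) y = (n:ℝ) * mL2 y - (n:ℝ) * Yv y w + ((n:ℝ) - 4) * (mV y + mC y) := by
  unfold rv
  rw [sum_gstrat (fun j => y j * gU1 φ (vS w) j)]
  simp only [gU1_v_l1, gU1_v_l2, gU1_v_v, gU1_v_c, gU1_v_f, mul_zero,
    Finset.sum_const_zero, ← Finset.sum_mul]
  have h2 : ∑ b : Lit n, y (l2 b) * (if b.1 = w then 0 else (n:ℝ))
      = (n:ℝ) * mL2 y - (n:ℝ) * Yv y w := by
    have key : ∀ b : Lit n, y (l2 b) * (if b.1 = w then 0 else (n:ℝ))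
        = y (l2 b) * (n:ℝ) - (n:ℝ) * (if b.1 = w then y (l2 b) else 0) := by
      intro b; by_cases h : b.1 = w <;> simp [h] <;> ring
    rw [Finset.sum_congr rfl fun b _ => key b, Finset.sum_sub_distrib,
      ← Finset.sum_mul, ← Finset.mul_sum]
    unfold mL2 Yv; ring
  rw [h2]
  unfold mL2 mV mC; ring

lemma rv_c (c : Fin m) (y : GStrat n m → ℝ) :
    rv φ (cS c) y = (n:ℝ) * mL2 y - (n:ℝ) * Yc φ y c + ((n:ℝ) - 4) * (mV y + mC y) := by
  unfold rv
  rw [sum_gstrat (fun j => y j * gU1 φ (cS c) j)]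
  simp only [gU1_c_l1, gU1_c_l2, gU1_c_v, gU1_c_c, gU1_c_f, mul_zero,
    Finset.sum_const_zero, ← Finset.sum_mul]
  have h2 : ∑ b : Lit n, y (l2 b) * (if b ∈ φ.clause c then 0 else (n:ℝ))
      = (n:ℝ) * mL2 y - (n:ℝ) * Yc φ y c := by
    have key : ∀ b : Lit n, y (l2 b) * (if b ∈ φ.clause c then 0 else (n:ℝ))
        = y (l2 b) * (n:ℝ) - (n:ℝ) * (if b ∈ φ.clause c then y (l2 b) else 0) := by
      intro b; by_cases h : b ∈ φ.clause c <;> simp [h] <;> ring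
    rw [Finset.sum_congr rfl fun b _ => key b, Finset.sum_sub_distrib,
      ← Finset.sum_mul, ← Finset.mul_sum]
    unfold mL2 Yc; ring
  rw [h2]
  unfold mL2 mV mC; ring


/-! column values -/

lemma cv_f (x : GStrat n m → ℝ) :
    cv φ x (fStrat n m) = 2 * (n:ℝ) * x (fStrat n m)
      + ((n:ℝ) - 1) * (mL1 x + mL2 x + mV x + mC x) := by
  unfold cv
  rw [sum_gstrat (fun i => x i * gU2 φ i (fStrat n m))]
  simp only [gU2_l1_f, gU2_l2_f, gU2_v_f, gU2_c_f, gU2_f_f, ← Finset.sum_mul]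
  unfold mL1 mL2 mV mC; ring

lemma cv_l1 (b : Lit n) (x : GStrat n m → ℝ) :
    cv φ x (l1 b) = -2 * (n:ℝ) * (mL1 x + mL2 x + mV x + mC x + x (fStrat n m)) := by
  unfold cv
  rw [sum_gstrat (fun i => x i * gU2 φ i (l1 b))]
  simp only [gU2_l1_l1, gU2_l2_l1, gU2_v_l1, gU2_c_l1, gU2_f_l1, ← Finset.sum_mul]
  unfold mL1 mL2 mV mC; ring

lemma cv_l2 (l : Lit n) (x : GStrat n m → ℝ) :
    cv φ x (l2 l) = ((n:ℝ) - 1) * mL1 x - 3 * x (l1 (negLit l))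
      + ((n:ℝ) - 4) * (mV x + mC x) := by
  unfold cv
  rw [sum_gstrat (fun i => x i * gU2 φ i (l2 l))]
  simp only [gU2_l1_l2, gU2_l2_l2, gU2_v_l2, gU2_c_l2, gU2_f_l2, mul_zero,
    Finset.sum_const_zero, ← Finset.sum_mul]
  have h2 : ∑ a : Lit n, x (l1 a) * (if a = negLit l then (n:ℝ) - 4 else (n:ℝ) - 1)
      = ((n:ℝ) - 1) * mL1 x - 3 * x (l1 (negLit l)) := by
    have key : ∀ a : Lit n, x (l1 a) * (if a = negLit l then (n:ℝ) - 4 else (n:ℝ) - 1)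
        = x (l1 a) * ((n:ℝ) - 1) - 3 * (if a = negLit l then x (l1 a) else 0) := by
      intro a; by_cases h : a = negLit l <;> simp [h] <;> ring
    rw [Finset.sum_congr rfl fun a _ => key a, Finset.sum_sub_distrib,
      ← Finset.sum_mul, ← Finset.mul_sum, Finset.sum_ite_eq' Finset.univ (negLit l)]
    simp [mL1, mul_comm]
  rw [h2]
  unfold mL1 mV mC; ring

lemma cv_v (w : Fin n) (x : GStrat n m → ℝ) :
    cv φ x (vS w) = (n:ℝ) * mL1 x - (n:ℝ) * Xv x w + ((n:ℝ) - 4) * (mV x + mC x) := by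
  unfold cv
  rw [sum_gstrat (fun i => x i * gU2 φ i (vS w))]
  simp only [gU2_l1_v, gU2_l2_v, gU2_v_v, gU2_c_v, gU2_f_v, mul_zero,
    Finset.sum_const_zero, ← Finset.sum_mul]
  have h2 : ∑ a : Lit n, x (l1 a) * (if a.1 = w then 0 else (n:ℝ))
      = (n:ℝ) * mL1 x - (n:ℝ) * Xv x w := by
    have key : ∀ a : Lit n, x (l1 a) * (if a.1 = w then 0 else (n:ℝ))
        = x (l1 a) * (n:ℝ) - (n:ℝ) * (if a.1 = w then x (l1 a) else 0) := by
      intro a; by_cases h : a.1 = w <;> simp [h] <;> ring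
    rw [Finset.sum_congr rfl fun a _ => key a, Finset.sum_sub_distrib,
      ← Finset.sum_mul, ← Finset.mul_sum]
    unfold mL1 Xv; ring
  rw [h2]
  unfold mL1 mV mC; ring

lemma cv_c (c : Fin m) (x : GStrat n m → ℝ) :
    cv φ x (cS c) = (n:ℝ) * mL1 x - (n:ℝ) * Xc φ x c + ((n:ℝ) - 4) * (mV x + mC x) := by
  unfold cv
  rw [sum_gstrat (fun i => x i * gU2 φ i (cS c))]
  simp only [gU2_l1_c, gU2_l2_c, gU2_v_c, gU2_c_c, gU2_f_c, mul_zero,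
    Finset.sum_const_zero, ← Finset.sum_mul]
  have h2 : ∑ a : Lit n, x (l1 a) * (if a ∈ φ.clause c then 0 else (n:ℝ))
      = (n:ℝ) * mL1 x - (n:ℝ) * Xc φ x c := by
    have key : ∀ a : Lit n, x (l1 a) * (if a ∈ φ.clause c then 0 else (n:ℝ))
        = x (l1 a) * (n:ℝ) - (n:ℝ) * (if a ∈ φ.clause c then x (l1 a) else 0) := by
      intro a; by_cases h : a ∈ φ.clause c <;> simp [h] <;> ring
    rw [Finset.sum_congr rfl fun a _ => key a, Finset.sum_sub_distrib,
      ← Finset.sum_mul, ← Finset.mul_sum]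
    unfold mL1 Xc; ring
  rw [h2]
  unfold mL1 mV mC; ring


/-! payoff decompositions -/

lemma U1_eq (x y : GStrat n m → ℝ) :
    payoff (gU1 φ) x y
      = (mL1 x * (((n:ℝ)-1) * mL2 y + ((n:ℝ)-4) * (mV y + mC y)) - 3 * Tc x y)
      + mL2 x * (-2 * (n:ℝ) * (mL1 y + mL2 y + mV y + mC y + y (fStrat n m)))
      + (mV x * ((n:ℝ) * mL2 y + ((n:ℝ)-4) * (mV y + mC y))
          - (n:ℝ) * (∑ w : Fin n, x (vS w) * Yv y w))
      + (mC x * ((n:ℝ) * mL2 y + ((n:ℝ)-4) * (mV y + mC y))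
          - (n:ℝ) * (∑ c : Fin m, x (cS c) * Yc φ y c))
      + x (fStrat n m) * (2 * (n:ℝ) * y (fStrat n m)
          + ((n:ℝ)-1) * (mL1 y + mL2 y + mV y + mC y)) := by
  have h0 : payoff (gU1 φ) x y = ∑ i, x i * rv φ i y := payoff_rowform _ _ _
  rw [h0, sum_gstrat (fun i => x i * rv φ i y)]
  simp only [rv_l1, rv_l2, rv_v, rv_c, rv_f]
  have h1 : ∑ a : Lit n, x (l1 a) * (((n:ℝ)-1) * mL2 y - 3 * y (l2 (negLit a))
        + ((n:ℝ)-4) * (mV y + mC y))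
      = mL1 x * (((n:ℝ)-1) * mL2 y + ((n:ℝ)-4) * (mV y + mC y)) - 3 * Tc x y := by
    rw [← Tc_rowform]
    have key : ∀ a : Lit n, x (l1 a) * (((n:ℝ)-1) * mL2 y - 3 * y (l2 (negLit a))
          + ((n:ℝ)-4) * (mV y + mC y))
        = x (l1 a) * (((n:ℝ)-1) * mL2 y + ((n:ℝ)-4) * (mV y + mC y))
          - 3 * (x (l1 a) * y (l2 (negLit a))) := fun a => by ring
    rw [Finset.sum_congr rfl fun a _ => key a, Finset.sum_sub_distrib,
      ← Finset.sum_mul, ← Finset.mul_sum]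
    rfl
  have h2 : ∑ a : Lit n, x (l2 a) * (-2 * (n:ℝ) * (mL1 y + mL2 y + mV y + mC y
        + y (fStrat n m)))
      = mL2 x * (-2 * (n:ℝ) * (mL1 y + mL2 y + mV y + mC y + y (fStrat n m))) := by
    rw [← Finset.sum_mul]; rfl
  have h3 : ∑ w : Fin n, x (vS w) * ((n:ℝ) * mL2 y - (n:ℝ) * Yv y w
        + ((n:ℝ)-4) * (mV y + mC y))
      = mV x * ((n:ℝ) * mL2 y + ((n:ℝ)-4) * (mV y + mC y))
        - (n:ℝ) * (∑ w : Fin n, x (vS w) * Yv y w) := by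
    have key : ∀ w : Fin n, x (vS w) * ((n:ℝ) * mL2 y - (n:ℝ) * Yv y w
          + ((n:ℝ)-4) * (mV y + mC y))
        = x (vS w) * ((n:ℝ) * mL2 y + ((n:ℝ)-4) * (mV y + mC y))
          - (n:ℝ) * (x (vS w) * Yv y w) := fun w => by ring
    rw [Finset.sum_congr rfl fun w _ => key w, Finset.sum_sub_distrib,
      ← Finset.sum_mul, ← Finset.mul_sum]
    rfl
  have h4 : ∑ c : Fin m, x (cS c) * ((n:ℝ) * mL2 y - (n:ℝ) * Yc φ y c
        + ((n:ℝ)-4) * (mV y + mC y))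
      = mC x * ((n:ℝ) * mL2 y + ((n:ℝ)-4) * (mV y + mC y))
        - (n:ℝ) * (∑ c : Fin m, x (cS c) * Yc φ y c) := by
    have key : ∀ c : Fin m, x (cS c) * ((n:ℝ) * mL2 y - (n:ℝ) * Yc φ y c
          + ((n:ℝ)-4) * (mV y + mC y))
        = x (cS c) * ((n:ℝ) * mL2 y + ((n:ℝ)-4) * (mV y + mC y))
          - (n:ℝ) * (x (cS c) * Yc φ y c) := fun c => by ring
    rw [Finset.sum_congr rfl fun c _ => key c, Finset.sum_sub_distrib,
      ← Finset.sum_mul, ← Finset.mul_sum]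
    rfl
  rw [h1, h2, h3, h4]

lemma U2_eq (x y : GStrat n m → ℝ) :
    payoff (gU2 φ) x y
      = mL1 y * (-2 * (n:ℝ) * (mL1 x + mL2 x + mV x + mC x + x (fStrat n m)))
      + (mL2 y * (((n:ℝ)-1) * mL1 x + ((n:ℝ)-4) * (mV x + mC x)) - 3 * Tc x y)
      + (mV y * ((n:ℝ) * mL1 x + ((n:ℝ)-4) * (mV x + mC x))
          - (n:ℝ) * (∑ w : Fin n, y (vS w) * Xv x w))
      + (mC y * ((n:ℝ) * mL1 x + ((n:ℝ)-4) * (mV x + mC x))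
          - (n:ℝ) * (∑ c : Fin m, y (cS c) * Xc φ x c))
      + y (fStrat n m) * (2 * (n:ℝ) * x (fStrat n m)
          + ((n:ℝ)-1) * (mL1 x + mL2 x + mV x + mC x)) := by
  have h0 : payoff (gU2 φ) x y = ∑ j, y j * cv φ x j := payoff_colform _ _ _
  rw [h0, sum_gstrat (fun j => y j * cv φ x j)]
  simp only [cv_l1, cv_l2, cv_v, cv_c, cv_f]
  have h1 : ∑ b : Lit n, y (l2 b) * (((n:ℝ)-1) * mL1 x - 3 * x (l1 (negLit b))
        + ((n:ℝ)-4) * (mV x + mC x))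
      = mL2 y * (((n:ℝ)-1) * mL1 x + ((n:ℝ)-4) * (mV x + mC x)) - 3 * Tc x y := by
    have key : ∀ b : Lit n, y (l2 b) * (((n:ℝ)-1) * mL1 x - 3 * x (l1 (negLit b))
          + ((n:ℝ)-4) * (mV x + mC x))
        = y (l2 b) * (((n:ℝ)-1) * mL1 x + ((n:ℝ)-4) * (mV x + mC x))
          - 3 * (y (l2 b) * x (l1 (negLit b))) := fun b => by ring
    rw [Finset.sum_congr rfl fun b _ => key b, Finset.sum_sub_distrib,
      ← Finset.sum_mul, ← Finset.mul_sum]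
    rfl
  have h2 : ∑ b : Lit n, y (l1 b) * (-2 * (n:ℝ) * (mL1 x + mL2 x + mV x + mC x
        + x (fStrat n m)))
      = mL1 y * (-2 * (n:ℝ) * (mL1 x + mL2 x + mV x + mC x + x (fStrat n m))) := by
    rw [← Finset.sum_mul]; rfl
  have h3 : ∑ w : Fin n, y (vS w) * ((n:ℝ) * mL1 x - (n:ℝ) * Xv x w
        + ((n:ℝ)-4) * (mV x + mC x))
      = mV y * ((n:ℝ) * mL1 x + ((n:ℝ)-4) * (mV x + mC x))
        - (n:ℝ) * (∑ w : Fin n, y (vS w) * Xv x w) := by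
    have key : ∀ w : Fin n, y (vS w) * ((n:ℝ) * mL1 x - (n:ℝ) * Xv x w
          + ((n:ℝ)-4) * (mV x + mC x))
        = y (vS w) * ((n:ℝ) * mL1 x + ((n:ℝ)-4) * (mV x + mC x))
          - (n:ℝ) * (y (vS w) * Xv x w) := fun w => by ring
    rw [Finset.sum_congr rfl fun w _ => key w, Finset.sum_sub_distrib,
      ← Finset.sum_mul, ← Finset.mul_sum]
    rfl
  have h4 : ∑ c : Fin m, y (cS c) * ((n:ℝ) * mL1 x - (n:ℝ) * Xc φ x c
        + ((n:ℝ)-4) * (mV x + mC x))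
      = mC y * ((n:ℝ) * mL1 x + ((n:ℝ)-4) * (mV x + mC x))
        - (n:ℝ) * (∑ c : Fin m, y (cS c) * Xc φ x c) := by
    have key : ∀ c : Fin m, y (cS c) * ((n:ℝ) * mL1 x - (n:ℝ) * Xc φ x c
          + ((n:ℝ)-4) * (mV x + mC x))
        = y (cS c) * ((n:ℝ) * mL1 x + ((n:ℝ)-4) * (mV x + mC x))
          - (n:ℝ) * (y (cS c) * Xc φ x c) := fun c => by ring
    rw [Finset.sum_congr rfl fun c _ => key c, Finset.sum_sub_distrib,
      ← Finset.sum_mul, ← Finset.mul_sum]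
    rfl
  rw [h1, h2, h3, h4]


/-! small helpers -/

lemma mass_total {z : GStrat n m → ℝ} (hz : z ∈ simplex (GStrat n m)) :
    mL1 z + mL2 z + mV z + mC z + z (fStrat n m) = 1 := by
  have h := hz.2
  rw [sum_gstrat z] at h
  exact h

lemma sum_Yv (y : GStrat n m → ℝ) : ∑ w : Fin n, Yv y w = mL2 y := by
  unfold Yv mL2
  rw [Finset.sum_comm]
  refine Finset.sum_congr rfl fun b _ => ?_
  simp

lemma sum_Xv (x : GStrat n m → ℝ) : ∑ w : Fin n, Xv x w = mL1 x := by
  unfold Xv mL1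
  rw [Finset.sum_comm]
  refine Finset.sum_congr rfl fun b _ => ?_
  simp

lemma Xv_pair (x : GStrat n m → ℝ) (w : Fin n) :
    Xv x w = x (l1 (w, true)) + x (l1 (w, false)) := by
  unfold Xv
  rw [Fintype.sum_prod_type]
  rw [Finset.sum_eq_single w]
  · simp
  · intro v _ hv; simp [hv]
  · intro h; exact absurd (Finset.mem_univ w) h

lemma Yc_clause (y : GStrat n m → ℝ) (c : Fin m) :
    Yc φ y c = ∑ b ∈ φ.clause c, y (l2 b) := by
  unfold Yc
  rw [Finset.sum_ite_mem, Finset.univ_inter]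

lemma exists_small (hn : 0 < n) (f : Fin n → ℝ) :
    ∃ w : Fin n, (n:ℝ) * f w ≤ ∑ v : Fin n, f v := by
  by_contra h
  push_neg at h
  have hne : (Finset.univ : Finset (Fin n)).Nonempty := by
    simpa [Finset.univ_nonempty_iff] using Fin.pos_iff_nonempty.mp hn
  have hlt := Finset.sum_lt_sum_of_nonempty hne (fun w _ => h w)
  rw [Finset.sum_const, ← Finset.mul_sum] at hlt
  simp only [Finset.card_univ, Fintype.card_fin, nsmul_eq_mul] at hlt
  exact absurd hlt (lt_irrefl _)

end S18

open S18 in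
set_option maxHeartbeats 1000000 in
theorem stmt18 {n m : ℕ} (hn : 4 ≤ n) (φ : CNF3 n m)
    (ε : ℝ) (hε : ε = 1 / (2 * (n : ℝ) ^ 3))
    (hunsat : ¬ φ.Satisfiable) :
    ∀ x y : GStrat n m → ℝ, IsEpsNash (gU1 φ) (gU2 φ) x y ε →
      1 - ε < x (fStrat n m) ∧ 1 - ε < y (fStrat n m) := by
  classical
  intro x y hNash
  obtain ⟨hx, hy, hN1, hN2⟩ := hNash
  by_contra hcon
  push_neg at hcon
  -- basic numeric facts
  have hN4 : (4:ℝ) ≤ (n:ℝ) := by exact_mod_cast hn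
  have hN0 : (0:ℝ) ≤ (n:ℝ) := by linarith
  have hNpos : (0:ℝ) < (n:ℝ) := by linarith
  have hεpos : 0 < ε := by rw [hε]; positivity
  have hεle : ε ≤ 1/128 := by
    rw [hε]
    rw [div_le_div_iff₀ (by positivity) (by norm_num)]
    have h2 : (16:ℝ) ≤ (n:ℝ)^2 := by nlinarith only [hN4]
    nlinarith only [h2, hN4]
  have hεN : 2 * (n:ℝ)^3 * ε = 1 := by rw [hε]; field_simp
  have hcase : x (fStrat n m) ≤ 1 - ε ∨ y (fStrat n m) ≤ 1 - ε := by
    by_cases h : 1 - ε < x (fStrat n m)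
    · exact Or.inr (hcon h)
    · exact Or.inl (by linarith)
  -- nonnegativity and totals
  have hx0 : ∀ i, 0 ≤ x i := hx.1
  have hy0 : ∀ i, 0 ≤ y i := hy.1
  have htx : mL1 x + mL2 x + mV x + mC x + x (fStrat n m) = 1 := mass_total hx
  have hty : mL1 y + mL2 y + mV y + mC y + y (fStrat n m) = 1 := mass_total hy
  have ha1 : 0 ≤ mL1 x := Finset.sum_nonneg fun _ _ => hx0 _
  have ha2 : 0 ≤ mL2 x := Finset.sum_nonneg fun _ _ => hx0 _
  have haV : 0 ≤ mV x := Finset.sum_nonneg fun _ _ => hx0 _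
  have haC : 0 ≤ mC x := Finset.sum_nonneg fun _ _ => hx0 _
  have hb1 : 0 ≤ mL1 y := Finset.sum_nonneg fun _ _ => hy0 _
  have hb2 : 0 ≤ mL2 y := Finset.sum_nonneg fun _ _ => hy0 _
  have hbV : 0 ≤ mV y := Finset.sum_nonneg fun _ _ => hy0 _
  have hbC : 0 ≤ mC y := Finset.sum_nonneg fun _ _ => hy0 _
  have hp0 : 0 ≤ x (fStrat n m) := hx0 _
  have hq0 : 0 ≤ y (fStrat n m) := hy0 _
  have hT0 : 0 ≤ Tc x y := Finset.sum_nonneg fun b _ => mul_nonneg (hy0 _) (hx0 _)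
  have hYv0 : ∀ w, 0 ≤ Yv y w := fun w =>
    Finset.sum_nonneg fun b _ => by split_ifs; exacts [hy0 _, le_rfl]
  have hYc0 : ∀ c, 0 ≤ Yc φ y c := fun c =>
    Finset.sum_nonneg fun b _ => by split_ifs; exacts [hy0 _, le_rfl]
  have hXv0 : ∀ w, 0 ≤ Xv x w := fun w =>
    Finset.sum_nonneg fun b _ => by split_ifs; exacts [hx0 _, le_rfl]
  have hXc0 : ∀ c, 0 ≤ Xc φ x c := fun c =>
    Finset.sum_nonneg fun b _ => by split_ifs; exacts [hx0 _, le_rfl]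
  have hGV0 : 0 ≤ ∑ w : Fin n, x (vS w) * Yv y w :=
    Finset.sum_nonneg fun w _ => mul_nonneg (hx0 _) (hYv0 w)
  have hGC0 : 0 ≤ ∑ c : Fin m, x (cS c) * Yc φ y c :=
    Finset.sum_nonneg fun c _ => mul_nonneg (hx0 _) (hYc0 c)
  have hHV0 : 0 ≤ ∑ w : Fin n, y (vS w) * Xv x w :=
    Finset.sum_nonneg fun w _ => mul_nonneg (hy0 _) (hXv0 w)
  have hHC0 : 0 ≤ ∑ c : Fin m, y (cS c) * Xc φ x c :=
    Finset.sum_nonneg fun c _ => mul_nonneg (hy0 _) (hXc0 c)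
  -- Nash conditions in value form
  have hrv : ∀ s, rv φ s y ≤ payoff (gU1 φ) x y + ε := by
    intro s
    have h := hN1 s
    rw [payoff_pure_left] at h
    exact h
  have hcv : ∀ t, cv φ x t ≤ payoff (gU2 φ) x y + ε := by
    intro t
    have h := hN2 t
    rw [payoff_pure_right] at h
    exact h
  -- convenient totals
  have e1 : (1:ℝ) - y (fStrat n m) = mL1 y + mL2 y + mV y + mC y := by linarith
  have e2 : (1:ℝ) - x (fStrat n m) = mL1 x + mL2 x + mV x + mC x := by linarith
  have hq1 : y (fStrat n m) ≤ 1 := by linarith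
  have hp1 : x (fStrat n m) ≤ 1 := by linarith
  have ha1le : mL1 x ≤ 1 := by linarith
  have hb2le : mL2 y ≤ 1 := by linarith
  -- row/column values of f
  have hU1f : (n:ℝ) - 1 + ((n:ℝ)+1) * y (fStrat n m) - ε ≤ payoff (gU1 φ) x y := by
    have h := hrv (fStrat n m)
    rw [rv_f] at h
    nlinarith only [h, e1, hN4]
  have hU2f : (n:ℝ) - 1 + ((n:ℝ)+1) * x (fStrat n m) - ε ≤ payoff (gU2 φ) x y := by
    have h := hcv (fStrat n m)
    rw [cv_f] at h
    nlinarith only [h, e2, hN4]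
  -- pigeonhole lower bounds
  have hU1K : ((n:ℝ)-1) * mL2 y + ((n:ℝ)-4) * (mV y + mC y) - ε ≤ payoff (gU1 φ) x y := by
    obtain ⟨w, hw⟩ := exists_small (by omega : 0 < n) (Yv y)
    rw [sum_Yv] at hw
    have h := hrv (vS w)
    rw [rv_v] at h
    linarith
  have hU2K : ((n:ℝ)-1) * mL1 x + ((n:ℝ)-4) * (mV x + mC x) - ε ≤ payoff (gU2 φ) x y := by
    obtain ⟨w, hw⟩ := exists_small (by omega : 0 < n) (Xv x)
    rw [sum_Xv] at hw
    have h := hcv (vS w)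
    rw [cv_v] at h
    linarith
  -- coverage Nash conditions
  have hYvN : ∀ w, (n:ℝ) * mL2 y - (n:ℝ) * Yv y w + ((n:ℝ)-4) * (mV y + mC y)
      ≤ payoff (gU1 φ) x y + ε := by
    intro w; have h := hrv (vS w); rwa [rv_v] at h
  have hYcN : ∀ c, (n:ℝ) * mL2 y - (n:ℝ) * Yc φ y c + ((n:ℝ)-4) * (mV y + mC y)
      ≤ payoff (gU1 φ) x y + ε := by
    intro c; have h := hrv (cS c); rwa [rv_c] at h
  have hXvN : ∀ w, (n:ℝ) * mL1 x - (n:ℝ) * Xv x w + ((n:ℝ)-4) * (mV x + mC x)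
      ≤ payoff (gU2 φ) x y + ε := by
    intro w; have h := hcv (vS w); rwa [cv_v] at h
  have hXcN : ∀ c, (n:ℝ) * mL1 x - (n:ℝ) * Xc φ x c + ((n:ℝ)-4) * (mV x + mC x)
      ≤ payoff (gU2 φ) x y + ε := by
    intro c; have h := hcv (cS c); rwa [cv_c] at h
  -- lower bounds on the interaction sums
  have hGVle : mV x * ((n:ℝ) * mL2 y + ((n:ℝ)-4) * (mV y + mC y)
        - payoff (gU1 φ) x y - ε) ≤ (n:ℝ) * ∑ w : Fin n, x (vS w) * Yv y w := by
    have key : ∀ w : Fin n, x (vS w) * ((n:ℝ) * mL2 y + ((n:ℝ)-4) * (mV y + mC y)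
          - payoff (gU1 φ) x y - ε) ≤ x (vS w) * ((n:ℝ) * Yv y w) := by
      intro w
      exact mul_le_mul_of_nonneg_left (by linarith [hYvN w]) (hx0 _)
    calc mV x * ((n:ℝ) * mL2 y + ((n:ℝ)-4) * (mV y + mC y) - payoff (gU1 φ) x y - ε)
        = ∑ w : Fin n, x (vS w) * ((n:ℝ) * mL2 y + ((n:ℝ)-4) * (mV y + mC y)
            - payoff (gU1 φ) x y - ε) := by
          show (∑ w : Fin n, x (vS w)) * _ = _
          rw [Finset.sum_mul]
      _ ≤ ∑ w : Fin n, x (vS w) * ((n:ℝ) * Yv y w) := Finset.sum_le_sum fun w _ => key w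
      _ = (n:ℝ) * ∑ w : Fin n, x (vS w) * Yv y w := by
          rw [Finset.mul_sum]; exact Finset.sum_congr rfl fun w _ => by ring
  have hGCle : mC x * ((n:ℝ) * mL2 y + ((n:ℝ)-4) * (mV y + mC y)
        - payoff (gU1 φ) x y - ε) ≤ (n:ℝ) * ∑ c : Fin m, x (cS c) * Yc φ y c := by
    have key : ∀ c : Fin m, x (cS c) * ((n:ℝ) * mL2 y + ((n:ℝ)-4) * (mV y + mC y)
          - payoff (gU1 φ) x y - ε) ≤ x (cS c) * ((n:ℝ) * Yc φ y c) := by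
      intro c
      exact mul_le_mul_of_nonneg_left (by linarith [hYcN c]) (hx0 _)
    calc mC x * ((n:ℝ) * mL2 y + ((n:ℝ)-4) * (mV y + mC y) - payoff (gU1 φ) x y - ε)
        = ∑ c : Fin m, x (cS c) * ((n:ℝ) * mL2 y + ((n:ℝ)-4) * (mV y + mC y)
            - payoff (gU1 φ) x y - ε) := by
          show (∑ c : Fin m, x (cS c)) * _ = _
          rw [Finset.sum_mul]
      _ ≤ ∑ c : Fin m, x (cS c) * ((n:ℝ) * Yc φ y c) := Finset.sum_le_sum fun c _ => key c
      _ = (n:ℝ) * ∑ c : Fin m, x (cS c) * Yc φ y c := by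
          rw [Finset.mul_sum]; exact Finset.sum_congr rfl fun c _ => by ring
  have hHVle : mV y * ((n:ℝ) * mL1 x + ((n:ℝ)-4) * (mV x + mC x)
        - payoff (gU2 φ) x y - ε) ≤ (n:ℝ) * ∑ w : Fin n, y (vS w) * Xv x w := by
    have key : ∀ w : Fin n, y (vS w) * ((n:ℝ) * mL1 x + ((n:ℝ)-4) * (mV x + mC x)
          - payoff (gU2 φ) x y - ε) ≤ y (vS w) * ((n:ℝ) * Xv x w) := by
      intro w
      exact mul_le_mul_of_nonneg_left (by linarith [hXvN w]) (hy0 _)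
    calc mV y * ((n:ℝ) * mL1 x + ((n:ℝ)-4) * (mV x + mC x) - payoff (gU2 φ) x y - ε)
        = ∑ w : Fin n, y (vS w) * ((n:ℝ) * mL1 x + ((n:ℝ)-4) * (mV x + mC x)
            - payoff (gU2 φ) x y - ε) := by
          show (∑ w : Fin n, y (vS w)) * _ = _
          rw [Finset.sum_mul]
      _ ≤ ∑ w : Fin n, y (vS w) * ((n:ℝ) * Xv x w) := Finset.sum_le_sum fun w _ => key w
      _ = (n:ℝ) * ∑ w : Fin n, y (vS w) * Xv x w := by
          rw [Finset.mul_sum]; exact Finset.sum_congr rfl fun w _ => by ring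
  have hHCle : mC y * ((n:ℝ) * mL1 x + ((n:ℝ)-4) * (mV x + mC x)
        - payoff (gU2 φ) x y - ε) ≤ (n:ℝ) * ∑ c : Fin m, y (cS c) * Xc φ x c := by
    have key : ∀ c : Fin m, y (cS c) * ((n:ℝ) * mL1 x + ((n:ℝ)-4) * (mV x + mC x)
          - payoff (gU2 φ) x y - ε) ≤ y (cS c) * ((n:ℝ) * Xc φ x c) := by
      intro c
      exact mul_le_mul_of_nonneg_left (by linarith [hXcN c]) (hy0 _)
    calc mC y * ((n:ℝ) * mL1 x + ((n:ℝ)-4) * (mV x + mC x) - payoff (gU2 φ) x y - ε)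
        = ∑ c : Fin m, y (cS c) * ((n:ℝ) * mL1 x + ((n:ℝ)-4) * (mV x + mC x)
            - payoff (gU2 φ) x y - ε) := by
          show (∑ c : Fin m, y (cS c)) * _ = _
          rw [Finset.sum_mul]
      _ ≤ ∑ c : Fin m, y (cS c) * ((n:ℝ) * Xc φ x c) := Finset.sum_le_sum fun c _ => key c
      _ = (n:ℝ) * ∑ c : Fin m, y (cS c) * Xc φ x c := by
          rw [Finset.mul_sum]; exact Finset.sum_congr rfl fun c _ => by ring
  -- cleaned payoff decompositions
  have hU1eq : payoff (gU1 φ) x y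
      = (mL1 x * (((n:ℝ)-1) * mL2 y + ((n:ℝ)-4) * (mV y + mC y)) - 3 * Tc x y)
      - 2 * (n:ℝ) * mL2 x
      + (mV x * ((n:ℝ) * mL2 y + ((n:ℝ)-4) * (mV y + mC y))
          - (n:ℝ) * (∑ w : Fin n, x (vS w) * Yv y w))
      + (mC x * ((n:ℝ) * mL2 y + ((n:ℝ)-4) * (mV y + mC y))
          - (n:ℝ) * (∑ c : Fin m, x (cS c) * Yc φ y c))
      + x (fStrat n m) * ((n:ℝ) - 1 + ((n:ℝ)+1) * y (fStrat n m)) := by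
    rw [U1_eq φ x y, hty, ← e1]
    ring
  have hU2eq : payoff (gU2 φ) x y
      = - 2 * (n:ℝ) * mL1 y
      + (mL2 y * (((n:ℝ)-1) * mL1 x + ((n:ℝ)-4) * (mV x + mC x)) - 3 * Tc x y)
      + (mV y * ((n:ℝ) * mL1 x + ((n:ℝ)-4) * (mV x + mC x))
          - (n:ℝ) * (∑ w : Fin n, y (vS w) * Xv x w))
      + (mC y * ((n:ℝ) * mL1 x + ((n:ℝ)-4) * (mV x + mC x))
          - (n:ℝ) * (∑ c : Fin m, y (cS c) * Xc φ x c))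
      + y (fStrat n m) * ((n:ℝ) - 1 + ((n:ℝ)+1) * x (fStrat n m)) := by
    rw [U2_eq φ x y, htx, ← e2]
    ring

  -- master inequality, row side
  have hmaster1 : payoff (gU1 φ) x y
      ≤ mL1 x * (((n:ℝ)-1) * mL2 y + ((n:ℝ)-4) * (mV y + mC y)) - 3 * Tc x y
        - 2 * (n:ℝ) * mL2 x
        + mV x * (payoff (gU1 φ) x y + ε) + mC x * (payoff (gU1 φ) x y + ε)
        + x (fStrat n m) * ((n:ℝ) - 1 + ((n:ℝ)+1) * y (fStrat n m)) := by
    linarith only [hU1eq, hGVle, hGCle]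
  have hmaster2 : payoff (gU2 φ) x y
      ≤ - 2 * (n:ℝ) * mL1 y
        + mL2 y * (((n:ℝ)-1) * mL1 x + ((n:ℝ)-4) * (mV x + mC x)) - 3 * Tc x y
        + mV y * (payoff (gU2 φ) x y + ε) + mC y * (payoff (gU2 φ) x y + ε)
        + y (fStrat n m) * ((n:ℝ) - 1 + ((n:ℝ)+1) * x (fStrat n m)) := by
    linarith only [hU2eq, hHVle, hHCle]
  have hRf0 : (0:ℝ) ≤ (n:ℝ) - 1 + ((n:ℝ)+1) * y (fStrat n m) := by
    linarith only [mul_nonneg (show (0:ℝ) ≤ (n:ℝ)+1 by linarith only [hN4]) hq0, hN4]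
  have hCf0 : (0:ℝ) ≤ (n:ℝ) - 1 + ((n:ℝ)+1) * x (fStrat n m) := by
    linarith only [mul_nonneg (show (0:ℝ) ≤ (n:ℝ)+1 by linarith only [hN4]) hp0, hN4]
  have hU1lb : (n:ℝ) - 1 - ε ≤ payoff (gU1 φ) x y := by
    linarith only [hU1f, mul_nonneg (show (0:ℝ) ≤ (n:ℝ)+1 by linarith only [hN4]) hq0]
  have hU2lb : (n:ℝ) - 1 - ε ≤ payoff (gU2 φ) x y := by
    linarith only [hU2f, mul_nonneg (show (0:ℝ) ≤ (n:ℝ)+1 by linarith only [hN4]) hp0]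
  have eU : (mL1 x + mL2 x + mV x + mC x + x (fStrat n m)) * payoff (gU1 φ) x y
      = payoff (gU1 φ) x y := by rw [htx, one_mul]
  have eU2 : (mL1 y + mL2 y + mV y + mC y + y (fStrat n m)) * payoff (gU2 φ) x y
      = payoff (gU2 φ) x y := by rw [hty, one_mul]
  have eUe : (mL1 x + mL2 x + mV x + mC x + x (fStrat n m)) * ε = ε := by
    rw [htx, one_mul]
  have eU2e : (mL1 y + mL2 y + mV y + mC y + y (fStrat n m)) * ε = ε := by
    rw [hty, one_mul]
  -- conflict bound and domination of L2 / L1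
  have hC2 : 3 * Tc x y + (3*(n:ℝ) - 1) * mL2 x ≤ ε := by
    have hA1 : mL1 x * (((n:ℝ)-1) * mL2 y + ((n:ℝ)-4) * (mV y + mC y))
        ≤ mL1 x * (payoff (gU1 φ) x y + ε) :=
      mul_le_mul_of_nonneg_left (by linarith [hU1K]) ha1
    have hA2 : x (fStrat n m) * ((n:ℝ) - 1 + ((n:ℝ)+1) * y (fStrat n m))
        ≤ x (fStrat n m) * (payoff (gU1 φ) x y + ε) :=
      mul_le_mul_of_nonneg_left (by linarith [hU1f]) hp0
    have hA3 : mL2 x * ((n:ℝ) - 1 - ε) ≤ mL2 x * payoff (gU1 φ) x y :=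
      mul_le_mul_of_nonneg_left hU1lb ha2
    linarith only [hmaster1, hA1, hA2, hA3, eU, eUe, mul_nonneg ha2 hεpos.le, hT0, ha2, hεpos]
  have hC2' : 3 * Tc x y + (3*(n:ℝ) - 1) * mL1 y ≤ ε := by
    have hA1 : mL2 y * (((n:ℝ)-1) * mL1 x + ((n:ℝ)-4) * (mV x + mC x))
        ≤ mL2 y * (payoff (gU2 φ) x y + ε) :=
      mul_le_mul_of_nonneg_left (by linarith [hU2K]) hb2
    have hA2 : y (fStrat n m) * ((n:ℝ) - 1 + ((n:ℝ)+1) * x (fStrat n m))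
        ≤ y (fStrat n m) * (payoff (gU2 φ) x y + ε) :=
      mul_le_mul_of_nonneg_left (by linarith [hU2f]) hq0
    have hA3 : mL1 y * ((n:ℝ) - 1 - ε) ≤ mL1 y * payoff (gU2 φ) x y :=
      mul_le_mul_of_nonneg_left hU2lb hb1
    linarith only [hmaster2, hA1, hA2, hA3, eU2, eU2e, mul_nonneg hb1 hεpos.le, hT0, hb1, hεpos]
  -- substitution identities
  have hb2expr : mL2 y = 1 - y (fStrat n m) - mL1 y - mV y - mC y := by linarith
  have ha1expr : mL1 x = 1 - x (fStrat n m) - mL2 x - mV x - mC x := by linarith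
  -- R1 : a1 * ((N+1)q + 3s) ≤ ε
  have hgap1 : ((n:ℝ)+1) * y (fStrat n m) + 3*(mV y + mC y)
      ≤ ((n:ℝ) - 1 + ((n:ℝ)+1) * y (fStrat n m))
        - (((n:ℝ)-1) * mL2 y + ((n:ℝ)-4) * (mV y + mC y)) := by
    rw [hb2expr]
    linarith only [mul_nonneg (show (0:ℝ) ≤ (n:ℝ)-1 by linarith only [hN4]) (add_nonneg hb1 hq0)]
  have hR1 : mL1 x * (((n:ℝ)+1) * y (fStrat n m) + 3*(mV y + mC y)) ≤ ε := by
    have hA1' : mL1 x * (((n:ℝ)+1) * y (fStrat n m) + 3*(mV y + mC y))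
        ≤ mL1 x * (((n:ℝ) - 1 + ((n:ℝ)+1) * y (fStrat n m))
          - (((n:ℝ)-1) * mL2 y + ((n:ℝ)-4) * (mV y + mC y))) :=
      mul_le_mul_of_nonneg_left hgap1 ha1
    have hB1 : mL1 x * ((n:ℝ) - 1 + ((n:ℝ)+1) * y (fStrat n m) - ε)
        ≤ mL1 x * payoff (gU1 φ) x y :=
      mul_le_mul_of_nonneg_left (by linarith [hU1f]) ha1
    have hB2 : mL2 x * ((n:ℝ) - 1 + ((n:ℝ)+1) * y (fStrat n m) - ε)
        ≤ mL2 x * payoff (gU1 φ) x y :=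
      mul_le_mul_of_nonneg_left (by linarith [hU1f]) ha2
    have hB3 : x (fStrat n m) * ((n:ℝ) - 1 + ((n:ℝ)+1) * y (fStrat n m) - ε)
        ≤ x (fStrat n m) * payoff (gU1 φ) x y :=
      mul_le_mul_of_nonneg_left (by linarith [hU1f]) hp0
    linarith only [hmaster1, hB1, hB2, hB3, eU, eUe, hA1', hT0, mul_nonneg ha2 hRf0,
      mul_nonneg (mul_nonneg hN0 ha2) (by norm_num : (0:ℝ) ≤ 2)]
  have hgap2 : ((n:ℝ)+1) * x (fStrat n m) + 3*(mV x + mC x)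
      ≤ ((n:ℝ) - 1 + ((n:ℝ)+1) * x (fStrat n m))
        - (((n:ℝ)-1) * mL1 x + ((n:ℝ)-4) * (mV x + mC x)) := by
    rw [ha1expr]
    linarith only [mul_nonneg (show (0:ℝ) ≤ (n:ℝ)-1 by linarith only [hN4]) (add_nonneg ha2 hp0)]
  have hR2 : mL2 y * (((n:ℝ)+1) * x (fStrat n m) + 3*(mV x + mC x)) ≤ ε := by
    have hA1' : mL2 y * (((n:ℝ)+1) * x (fStrat n m) + 3*(mV x + mC x))
        ≤ mL2 y * (((n:ℝ) - 1 + ((n:ℝ)+1) * x (fStrat n m))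
          - (((n:ℝ)-1) * mL1 x + ((n:ℝ)-4) * (mV x + mC x))) :=
      mul_le_mul_of_nonneg_left hgap2 hb2
    have hB1 : mL2 y * ((n:ℝ) - 1 + ((n:ℝ)+1) * x (fStrat n m) - ε)
        ≤ mL2 y * payoff (gU2 φ) x y :=
      mul_le_mul_of_nonneg_left (by linarith [hU2f]) hb2
    have hB2 : mL1 y * ((n:ℝ) - 1 + ((n:ℝ)+1) * x (fStrat n m) - ε)
        ≤ mL1 y * payoff (gU2 φ) x y :=
      mul_le_mul_of_nonneg_left (by linarith [hU2f]) hb1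
    have hB3 : y (fStrat n m) * ((n:ℝ) - 1 + ((n:ℝ)+1) * x (fStrat n m) - ε)
        ≤ y (fStrat n m) * payoff (gU2 φ) x y :=
      mul_le_mul_of_nonneg_left (by linarith [hU2f]) hq0
    linarith only [hmaster2, hB1, hB2, hB3, eU2, eU2e, hA1', hT0, mul_nonneg hb1 hCf0,
      mul_nonneg (mul_nonneg hN0 hb1) (by norm_num : (0:ℝ) ≤ 2)]

  -- upper bound for U1 without interaction terms
  have hU1up2 : payoff (gU1 φ) x y
      ≤ mL1 x * (((n:ℝ)-1) * mL2 y + ((n:ℝ)-4) * (mV y + mC y))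
        + mV x * ((n:ℝ) * mL2 y + ((n:ℝ)-4) * (mV y + mC y))
        + mC x * ((n:ℝ) * mL2 y + ((n:ℝ)-4) * (mV y + mC y))
        + x (fStrat n m) * ((n:ℝ) - 1 + ((n:ℝ)+1) * y (fStrat n m)) := by
    linarith only [hU1eq, hT0, mul_nonneg hN0 hGV0, mul_nonneg hN0 hGC0,
      mul_nonneg hN0 ha2]
  have hU2up2 : payoff (gU2 φ) x y
      ≤ mL2 y * (((n:ℝ)-1) * mL1 x + ((n:ℝ)-4) * (mV x + mC x))
        + mV y * ((n:ℝ) * mL1 x + ((n:ℝ)-4) * (mV x + mC x))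
        + mC y * ((n:ℝ) * mL1 x + ((n:ℝ)-4) * (mV x + mC x))
        + y (fStrat n m) * ((n:ℝ) - 1 + ((n:ℝ)+1) * x (fStrat n m)) := by
    linarith only [hU2eq, hT0, mul_nonneg hN0 hHV0, mul_nonneg hN0 hHC0,
      mul_nonneg hN0 hb1]
  have hN1' : (0:ℝ) ≤ (n:ℝ) - 1 := by linarith only [hN4]
  have hN4' : (0:ℝ) ≤ (n:ℝ) - 4 := by linarith only [hN4]
  have hNp1 : (0:ℝ) ≤ (n:ℝ) + 1 := by linarith only [hN4]
  have hK'0 : 0 ≤ ((n:ℝ)-1) * mL2 y + ((n:ℝ)-4) * (mV y + mC y) :=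
    add_nonneg (mul_nonneg hN1' hb2) (mul_nonneg hN4' (add_nonneg hbV hbC))
  have hK0 : 0 ≤ ((n:ℝ)-1) * mL1 x + ((n:ℝ)-4) * (mV x + mC x) :=
    add_nonneg (mul_nonneg hN1' ha1) (mul_nonneg hN4' (add_nonneg haV haC))
  have hKRf : ((n:ℝ)-1) * mL2 y + ((n:ℝ)-4) * (mV y + mC y)
      ≤ (n:ℝ) - 1 + ((n:ℝ)+1) * y (fStrat n m) := by
    linarith only [hgap1, mul_nonneg hNp1 hq0, hbV, hbC]
  have hKCf : ((n:ℝ)-1) * mL1 x + ((n:ℝ)-4) * (mV x + mC x)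
      ≤ (n:ℝ) - 1 + ((n:ℝ)+1) * x (fStrat n m) := by
    linarith only [hgap2, mul_nonneg hNp1 hp0, haV, haC]
  have eRf : (mL1 x + mL2 x + mV x + mC x + x (fStrat n m))
      * ((n:ℝ) - 1 + ((n:ℝ)+1) * y (fStrat n m))
      = (n:ℝ) - 1 + ((n:ℝ)+1) * y (fStrat n m) := by rw [htx, one_mul]
  have eCf : (mL1 y + mL2 y + mV y + mC y + y (fStrat n m))
      * ((n:ℝ) - 1 + ((n:ℝ)+1) * x (fStrat n m))
      = (n:ℝ) - 1 + ((n:ℝ)+1) * x (fStrat n m) := by rw [hty, one_mul]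
  -- R3 : r (4 s - 1) ≤ ε and mirror
  have hC4' : mV x * ((n:ℝ) - 1 + ((n:ℝ)+1) * y (fStrat n m))
      + mC x * ((n:ℝ) - 1 + ((n:ℝ)+1) * y (fStrat n m))
      - mV x * ((n:ℝ) * mL2 y + ((n:ℝ)-4) * (mV y + mC y))
      - mC x * ((n:ℝ) * mL2 y + ((n:ℝ)-4) * (mV y + mC y)) ≤ ε := by
    linarith only [hU1f, hU1up2, mul_le_mul_of_nonneg_left hKRf ha1, eRf,
      mul_nonneg ha2 hRf0]
  have hC4'' : mL2 y * ((n:ℝ) - 1 + ((n:ℝ)+1) * x (fStrat n m))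
      + mV y * ((n:ℝ) - 1 + ((n:ℝ)+1) * x (fStrat n m))
      + mC y * ((n:ℝ) - 1 + ((n:ℝ)+1) * x (fStrat n m))
      - mL2 y * (((n:ℝ)-1) * mL1 x + ((n:ℝ)-4) * (mV x + mC x))
      - mV y * ((n:ℝ) * mL1 x + ((n:ℝ)-4) * (mV x + mC x))
      - mC y * ((n:ℝ) * mL1 x + ((n:ℝ)-4) * (mV x + mC x)) ≤ ε := by
    linarith only [hU2f, hU2up2, eCf, mul_nonneg hb1 hCf0]
  have hR3 : (mV x + mC x) * (4*(mV y + mC y) - 1) ≤ ε := by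
    have hWgap : 4*(mV y + mC y) - 1
        ≤ ((n:ℝ) - 1 + ((n:ℝ)+1) * y (fStrat n m))
          - ((n:ℝ) * mL2 y + ((n:ℝ)-4) * (mV y + mC y)) := by
      rw [hb2expr]
      linarith only [mul_nonneg hN0 (add_nonneg hb1 hq0), mul_nonneg hNp1 hq0]
    have h := mul_le_mul_of_nonneg_left hWgap (add_nonneg haV haC)
    linarith only [h, hC4']
  have hR3' : (mV y + mC y) * (4*(mV x + mC x) - 1) ≤ ε := by
    have hWgap : 4*(mV x + mC x) - 1
        ≤ ((n:ℝ) - 1 + ((n:ℝ)+1) * x (fStrat n m))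
          - ((n:ℝ) * mL1 x + ((n:ℝ)-4) * (mV x + mC x)) := by
      rw [ha1expr]
      linarith only [mul_nonneg hN0 (add_nonneg ha2 hp0), mul_nonneg hNp1 hp0]
    have h := mul_le_mul_of_nonneg_left hWgap (add_nonneg hbV hbC)
    have hBl2 : mL2 y * (((n:ℝ) - 1 + ((n:ℝ)+1) * x (fStrat n m))
        - (((n:ℝ)-1) * mL1 x + ((n:ℝ)-4) * (mV x + mC x))) ≥ 0 :=
      mul_nonneg hb2 (by linarith only [hKCf])
    linarith only [h, hC4'', hBl2]
  -- clean upper bounds for coverage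
  have hU1upK : payoff (gU1 φ) x y
      ≤ (((n:ℝ)-1) * mL2 y + ((n:ℝ)-4) * (mV y + mC y)) + (mV x + mC x)
        + x (fStrat n m) * ((n:ℝ) - 1 + ((n:ℝ)+1) * y (fStrat n m)) := by
    linarith only [hU1up2,
      mul_nonneg (show (0:ℝ) ≤ 1 - mL1 x - mV x - mC x by
        linarith only [htx, ha2, hp0]) hK'0,
      mul_nonneg (add_nonneg haV haC)
        (show (0:ℝ) ≤ 1 - mL2 y by linarith only [hty, hb1, hbV, hbC, hq0])]
  have hU2upK : payoff (gU2 φ) x y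
      ≤ (((n:ℝ)-1) * mL1 x + ((n:ℝ)-4) * (mV x + mC x)) + (mV y + mC y)
        + y (fStrat n m) * ((n:ℝ) - 1 + ((n:ℝ)+1) * x (fStrat n m)) := by
    linarith only [hU2up2,
      mul_nonneg (show (0:ℝ) ≤ 1 - mL2 y - mV y - mC y by
        linarith only [hty, hb1, hq0]) hK0,
      mul_nonneg (add_nonneg hbV hbC)
        (show (0:ℝ) ≤ 1 - mL1 x by linarith only [htx, ha2, haV, haC, hp0])]
  -- coverage lower bounds
  have hXvlb : ∀ w, mL1 x - (mV y + mC y)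
      - y (fStrat n m) * ((n:ℝ) - 1 + ((n:ℝ)+1) * x (fStrat n m)) - 2*ε
      ≤ (n:ℝ) * Xv x w := by
    intro w
    linarith only [hXvN w, hU2upK, hεpos]
  have hYclb : ∀ c, mL2 y - (mV x + mC x)
      - x (fStrat n m) * ((n:ℝ) - 1 + ((n:ℝ)+1) * y (fStrat n m)) - 2*ε
      ≤ (n:ℝ) * Yc φ y c := by
    intro c
    linarith only [hYcN c, hU1upK, hεpos]
  -- G1 and G1'
  have hKW : ((n:ℝ)-1) * mL2 y + ((n:ℝ)-4) * (mV y + mC y)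
      ≤ (n:ℝ) * (1 - y (fStrat n m)) := by
    rw [hb2expr]
    linarith only [mul_nonneg hN1' hb1, hbV, hbC, hq1]
  have hWle2 : (n:ℝ) * mL2 y + ((n:ℝ)-4) * (mV y + mC y)
      ≤ (n:ℝ) * (1 - y (fStrat n m)) := by
    rw [hb2expr]
    linarith only [mul_nonneg hN0 hb1, hbV, hbC]
  have hKW' : ((n:ℝ)-1) * mL1 x + ((n:ℝ)-4) * (mV x + mC x)
      ≤ (n:ℝ) * (1 - x (fStrat n m)) := by
    rw [ha1expr]
    linarith only [mul_nonneg hN1' ha2, haV, haC, hp1]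
  have hWle2' : (n:ℝ) * mL1 x + ((n:ℝ)-4) * (mV x + mC x)
      ≤ (n:ℝ) * (1 - x (fStrat n m)) := by
    rw [ha1expr]
    linarith only [mul_nonneg hN0 ha2, haV, haC]
  have hG1 : (1 - x (fStrat n m)) * ((2*(n:ℝ)+1) * y (fStrat n m) - 1) ≤ ε := by
    have ha2' : -2 * (n:ℝ) * mL2 x ≤ mL2 x * ((n:ℝ) * (1 - y (fStrat n m))) := by
      have h1 := mul_nonneg ha2 (mul_nonneg hN0 (show (0:ℝ) ≤ 1 - y (fStrat n m) by
        linarith only [hq1]))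
      have h2 := mul_nonneg hN0 ha2
      linarith only [h1, h2]
    have hU1up1 : payoff (gU1 φ) x y
        ≤ mL1 x * ((n:ℝ) * (1 - y (fStrat n m)))
          + mL2 x * ((n:ℝ) * (1 - y (fStrat n m)))
          + mV x * ((n:ℝ) * (1 - y (fStrat n m)))
          + mC x * ((n:ℝ) * (1 - y (fStrat n m)))
          + x (fStrat n m) * ((n:ℝ) - 1 + ((n:ℝ)+1) * y (fStrat n m)) := by
      linarith only [hU1eq, hT0, mul_nonneg hN0 hGV0, mul_nonneg hN0 hGC0, ha2',
        mul_le_mul_of_nonneg_left hKW ha1,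
        mul_le_mul_of_nonneg_left hWle2 haV,
        mul_le_mul_of_nonneg_left hWle2 haC]
    have key2 : (1 - x (fStrat n m)) * ((n:ℝ) * (1 - y (fStrat n m)))
        = mL1 x * ((n:ℝ) * (1 - y (fStrat n m)))
          + mL2 x * ((n:ℝ) * (1 - y (fStrat n m)))
          + mV x * ((n:ℝ) * (1 - y (fStrat n m)))
          + mC x * ((n:ℝ) * (1 - y (fStrat n m))) := by
      rw [e2]; ring
    linarith only [hU1f, hU1up1, key2]
  have hG1' : (1 - y (fStrat n m)) * ((2*(n:ℝ)+1) * x (fStrat n m) - 1) ≤ ε := by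
    have hb1' : -2 * (n:ℝ) * mL1 y ≤ mL1 y * ((n:ℝ) * (1 - x (fStrat n m))) := by
      have h1 := mul_nonneg hb1 (mul_nonneg hN0 (show (0:ℝ) ≤ 1 - x (fStrat n m) by
        linarith only [hp1]))
      have h2 := mul_nonneg hN0 hb1
      linarith only [h1, h2]
    have hU2up1 : payoff (gU2 φ) x y
        ≤ mL1 y * ((n:ℝ) * (1 - x (fStrat n m)))
          + mL2 y * ((n:ℝ) * (1 - x (fStrat n m)))
          + mV y * ((n:ℝ) * (1 - x (fStrat n m)))
          + mC y * ((n:ℝ) * (1 - x (fStrat n m)))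
          + y (fStrat n m) * ((n:ℝ) - 1 + ((n:ℝ)+1) * x (fStrat n m)) := by
      linarith only [hU2eq, hT0, mul_nonneg hN0 hHV0, mul_nonneg hN0 hHC0, hb1',
        mul_le_mul_of_nonneg_left hKW' hb2,
        mul_le_mul_of_nonneg_left hWle2' hbV,
        mul_le_mul_of_nonneg_left hWle2' hbC]
    have key2 : (1 - y (fStrat n m)) * ((n:ℝ) * (1 - x (fStrat n m)))
        = mL1 y * ((n:ℝ) * (1 - x (fStrat n m)))
          + mL2 y * ((n:ℝ) * (1 - x (fStrat n m)))
          + mV y * ((n:ℝ) * (1 - x (fStrat n m)))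
          + mC y * ((n:ℝ) * (1 - x (fStrat n m))) := by
      rw [e1]; ring
    linarith only [hU2f, hU2up1, key2]

  -- both f–probabilities are at most 2/9
  have hpq29 : x (fStrat n m) ≤ 2/9 ∧ y (fStrat n m) ≤ 2/9 := by
    rcases hcase with hpc | hqc
    · have hq2 : (2*(n:ℝ)+1) * y (fStrat n m) ≤ 2 := by
        nlinarith only [hG1, hpc, hεpos, hq0, hNp1]
      have hq29 : y (fStrat n m) ≤ 2/9 := by nlinarith only [hq2, hq0, hN4]
      have hp2 : (2*(n:ℝ)+1) * x (fStrat n m) ≤ 1 + 2*ε := by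
        nlinarith only [hG1', hq29, hεpos, hp0, hN4]
      have hp29 : x (fStrat n m) ≤ 2/9 := by
        nlinarith only [hp2, hp0, hN4, hεpos, hεle]
      exact ⟨hp29, hq29⟩
    · have hp2 : (2*(n:ℝ)+1) * x (fStrat n m) ≤ 2 := by
        nlinarith only [hG1', hqc, hεpos, hp0, hNp1]
      have hp29 : x (fStrat n m) ≤ 2/9 := by nlinarith only [hp2, hp0, hN4]
      have hq2 : (2*(n:ℝ)+1) * y (fStrat n m) ≤ 1 + 2*ε := by
        nlinarith only [hG1, hp29, hεpos, hq0, hN4]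
      have hq29 : y (fStrat n m) ≤ 2/9 := by
        nlinarith only [hq2, hq0, hN4, hεpos, hεle]
      exact ⟨hp29, hq29⟩
  -- dominated strategies have tiny mass
  have ha2e : 11 * mL2 x ≤ ε := by nlinarith only [hC2, hT0, ha2, hN4]
  have hb1e : 11 * mL1 y ≤ ε := by nlinarith only [hC2', hT0, hb1, hN4]
  have hT3 : 3 * Tc x y ≤ ε := by
    nlinarith only [hC2, mul_nonneg ha2 (show (0:ℝ) ≤ 3*(n:ℝ)-1 by linarith only [hN4])]
  -- checker masses are tiny
  have h3as : 3 * (mL1 x * (mV y + mC y)) ≤ ε := by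
    nlinarith only [hR1, mul_nonneg ha1 (mul_nonneg hNp1 hq0)]
  have h3br : 3 * (mL2 y * (mV x + mC x)) ≤ ε := by
    nlinarith only [hR2, mul_nonneg hb2 (mul_nonneg hNp1 hp0)]
  have hrs : (mV x + mC x) ≤ ε ∧ (mV y + mC y) ≤ ε := by
    rcases le_or_gt (mV x + mC x) (1/2) with hr2 | hr2
    · rcases le_or_gt (mV y + mC y) (1/2) with hs2 | hs2
      · have ha1c : (0.27:ℝ) ≤ mL1 x := by
          linarith only [htx, ha2e, hεle, hpq29.1, hr2, hεpos]
        have hs' : (mV y + mC y) ≤ 2*ε := by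
          nlinarith only [h3as, ha1c, add_nonneg hbV hbC, hεpos]
        have hb2c : (0.75:ℝ) ≤ mL2 y := by
          linarith only [hty, hb1e, hεle, hpq29.2, hs', hεpos]
        have hr' : (mV x + mC x) ≤ ε/2 := by
          nlinarith only [h3br, hb2c, add_nonneg haV haC, hεpos]
        have ha1c2 : (0.75:ℝ) ≤ mL1 x := by
          linarith only [htx, ha2e, hεle, hpq29.1, hr', hεpos]
        have hs'' : (mV y + mC y) ≤ ε/2 := by
          nlinarith only [h3as, ha1c2, add_nonneg hbV hbC, hεpos]
        exact ⟨by linarith only [hr', hεpos], by linarith only [hs'', hεpos]⟩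
      · exfalso
        have ha1small : mL1 x ≤ 2/3*ε := by
          nlinarith only [h3as, hs2, ha1, hεpos]
        have hrbig : (0.7:ℝ) ≤ mV x + mC x := by
          linarith only [htx, ha1small, ha2e, hpq29.1, hεle, hεpos, hp0]
        nlinarith only [hR3', hs2, hrbig, hεle,
          mul_nonneg (show (0:ℝ) ≤ mV y + mC y - 1/2 by linarith only [hs2])
            (show (0:ℝ) ≤ 4*(mV x + mC x) - 1 - 9/5 by linarith only [hrbig])]
    · exfalso
      have hb2small : mL2 y ≤ 2/3*ε := by
        nlinarith only [h3br, hr2, hb2, hεpos]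
      have hsbig : (0.7:ℝ) ≤ mV y + mC y := by
        linarith only [hty, hb2small, hb1e, hpq29.2, hεle, hεpos, hq0]
      nlinarith only [hR3, hr2, hsbig, hεle,
        mul_nonneg (show (0:ℝ) ≤ mV x + mC x - 1/2 by linarith only [hr2])
          (show (0:ℝ) ≤ 4*(mV y + mC y) - 1 - 9/5 by linarith only [hsbig])]
  obtain ⟨hrε, hsε⟩ := hrs
  -- refined bounds on p and q
  have ha1c3 : (0.76:ℝ) ≤ mL1 x := by
    linarith only [htx, ha2e, hrε, hpq29.1, hεle, hεpos]
  have hb2c3 : (0.76:ℝ) ≤ mL2 y := by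
    linarith only [hty, hb1e, hsε, hpq29.2, hεle, hεpos]
  have hq2e : ((n:ℝ)+1) * y (fStrat n m) ≤ 2*ε := by
    nlinarith only [hR1, ha1c3, mul_nonneg hNp1 hq0,
      mul_nonneg ha1 (add_nonneg hbV hbC), hεpos]
  have hp2e : ((n:ℝ)+1) * x (fStrat n m) ≤ 2*ε := by
    nlinarith only [hR2, hb2c3, mul_nonneg hNp1 hp0,
      mul_nonneg hb2 (add_nonneg haV haC), hεpos]
  have hq5 : y (fStrat n m) ≤ 2/5*ε := by nlinarith only [hq2e, hq0, hN4]
  have hp5 : x (fStrat n m) ≤ 2/5*ε := by nlinarith only [hp2e, hp0, hN4]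
  have ha1big : 1 - 2*ε ≤ mL1 x := by
    linarith only [htx, ha2e, hrε, hp5, hεpos]
  have hb2big : 1 - 2*ε ≤ mL2 y := by
    linarith only [hty, hb1e, hsε, hq5, hεpos]
  -- the f–payoff cross terms are tiny
  have hqCf : y (fStrat n m) * ((n:ℝ) - 1 + ((n:ℝ)+1) * x (fStrat n m)) ≤ 3*ε := by
    have h1 : y (fStrat n m) * (((n:ℝ)+1) * x (fStrat n m))
        ≤ y (fStrat n m) * (2*ε) := mul_le_mul_of_nonneg_left hp2e hq0
    have h2 : y (fStrat n m) * (2*ε) ≤ 1 * (2*ε) :=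
      mul_le_mul_of_nonneg_right hq1 (by linarith only [hεpos])
    have h3 : y (fStrat n m) * (2*ε) ≤ (2/5*ε) * (2*ε) :=
      mul_le_mul_of_nonneg_right hq5 (by linarith only [hεpos])
    have h4 : ε*ε ≤ ε*(1/128) := mul_le_mul_of_nonneg_left hεle hεpos.le
    nlinarith only [h1, h3, h4, hq2e, hq0, hεpos]
  have hpRf : x (fStrat n m) * ((n:ℝ) - 1 + ((n:ℝ)+1) * y (fStrat n m)) ≤ 3*ε := by
    have h1 : x (fStrat n m) * (((n:ℝ)+1) * y (fStrat n m))
        ≤ x (fStrat n m) * (2*ε) := mul_le_mul_of_nonneg_left hq2e hp0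
    have h3 : x (fStrat n m) * (2*ε) ≤ (2/5*ε) * (2*ε) :=
      mul_le_mul_of_nonneg_right hp5 (by linarith only [hεpos])
    have h4 : ε*ε ≤ ε*(1/128) := mul_le_mul_of_nonneg_left hεle hεpos.le
    nlinarith only [h1, h3, h4, hp2e, hp0, hεpos]
  -- final coverage bounds
  have hXvfin : ∀ w, 1 - 9*ε ≤ (n:ℝ) * Xv x w := by
    intro w
    linarith only [hXvlb w, ha1big, hsε, hqCf, hεpos]
  have hYcfin : ∀ c, 1 - 9*ε ≤ (n:ℝ) * Yc φ y c := by
    intro c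
    linarith only [hYclb c, hb2big, hrε, hpRf, hεpos]
  -- the unsatisfied clause
  obtain ⟨c, hc⟩ : ∃ c, ∀ l ∈ φ.clause c,
      ¬ ((fun w : Fin n => decide (x (l1 (w, false)) ≤ x (l1 (w, true)))) l.1 = l.2) := by
    by_contra hsat
    push_neg at hsat
    exact hunsat ⟨fun w : Fin n => decide (x (l1 (w, false)) ≤ x (l1 (w, true))),
      fun c => hsat c⟩
  have hmaj : ∀ l ∈ φ.clause c, Xv x l.1 ≤ 2 * x (l1 (negLit l)) := by
    rintro ⟨w, b⟩ hl
    have hne := hc _ hl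
    simp only [decide_eq_true_eq] at hne  -- may or may not fire; fallback below
    rw [Xv_pair]
    cases b
    · have hP : x (l1 ((w, false)) : GStrat n m) ≤ x (l1 (w, true)) := by
        by_contra hnP
        exact hne (by simpa using decide_eq_false hnP)
      have hneg : negLit ((w, false) : Lit n) = (w, true) := rfl
      rw [hneg]
      linarith only [hP]
    · have hnP : ¬ (x (l1 ((w, false)) : GStrat n m) ≤ x (l1 (w, true))) := by
        intro hP
        exact hne (by simpa using decide_eq_true hP)
      have hneg : negLit ((w, true) : Lit n) = (w, false) := rfl
      rw [hneg]
      push_neg at hnP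
      linarith only [hnP]
  -- lower bound on the conflict sum
  have hsub : ∑ b ∈ φ.clause c, y (l2 b) * x (l1 (negLit b)) ≤ Tc x y := by
    apply Finset.sum_le_sum_of_subset_of_nonneg (Finset.subset_univ _)
    intro b _ _
    exact mul_nonneg (hy0 _) (hx0 _)
  have hD : ∀ b ∈ φ.clause c, (1 - 9*ε)/(2*(n:ℝ)) ≤ x (l1 (negLit b)) := by
    intro b hb
    rw [div_le_iff₀ (by positivity)]
    have h2 := mul_le_mul_of_nonneg_left (hmaj b hb) hN0
    linarith only [hXvfin b.1, h2]
  have hsum2 : Yc φ y c * ((1 - 9*ε)/(2*(n:ℝ)))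
      ≤ ∑ b ∈ φ.clause c, y (l2 b) * x (l1 (negLit b)) := by
    rw [Yc_clause, Finset.sum_mul]
    exact Finset.sum_le_sum fun b hb => mul_le_mul_of_nonneg_left (hD b hb) (hy0 _)
  have hDpos : (0:ℝ) ≤ (1 - 9*ε)/(2*(n:ℝ)) :=
    div_nonneg (by linarith only [hεle]) (by positivity)
  have hYcD : (1 - 9*ε)/(n:ℝ) ≤ Yc φ y c := by
    rw [div_le_iff₀ hNpos]
    linarith only [hYcfin c]
  have hchain : ((1 - 9*ε)/(n:ℝ)) * ((1 - 9*ε)/(2*(n:ℝ))) ≤ Tc x y :=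
    le_trans (mul_le_mul_of_nonneg_right hYcD hDpos) (le_trans hsum2 hsub)
  -- final numeric contradiction
  have hfrac : ((1 - 9*ε)/(n:ℝ)) * ((1 - 9*ε)/(2*(n:ℝ)))
      = (1 - 9*ε)^2 / (2*(n:ℝ)^2) := by
    field_simp
  rw [hfrac] at hchain
  have h3 : 3*((1 - 9*ε)^2/(2*(n:ℝ)^2)) ≤ ε := by linarith only [hchain, hT3]
  have h4 : 3*((1 - 9*ε)^2/(2*(n:ℝ)^2)) = (3*(1 - 9*ε)^2)/(2*(n:ℝ)^2) := by ring
  rw [h4, div_le_iff₀ (by positivity)] at h3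
  have h5 : ε*(2*(n:ℝ)^2)*(n:ℝ) = 1 := by rw [← hεN]; ring
  have h7 : 3*(1 - 9*ε)^2*(n:ℝ) ≤ 1 := by
    have h6 := mul_le_mul_of_nonneg_right h3 hN0
    linarith only [h6, h5]
  have h8 : (119:ℝ)/128 ≤ 1 - 9*ε := by linarith only [hεle]
  have h9 : (119/128:ℝ)*(119/128) ≤ (1 - 9*ε)*(1 - 9*ε) :=
    mul_le_mul h8 h8 (by norm_num) (by linarith only [hεle])
  have h10 : (0:ℝ) ≤ ((1 - 9*ε)*(1 - 9*ε) - (119/128)*(119/128))*(n:ℝ) :=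
    mul_nonneg (by linarith only [h9]) hN0
  linarith only [h7, h10, hN4]
end

section
/- Let φ be a 3CNF formula with n ≥ 4 variables and ε = 1/(2n³). In every ε-Nash equilibrium (x, y) of the game G(φ), each player's expected payoff is at least n − 1 − ε: U₁(x,y) ≥ n − 1 − ε and U₂(x,y) ≥ n − 1 − ε. -/
open Finset

lemma payoff_pure_left {S : Type*} [Fintype S] [DecidableEq S]
    (A : S → S → ℝ) (s : S) (y : S → ℝ) :
    payoff A (pureStrat s) y = ∑ j, y j * A s j := by
  unfold payoff pureStrat
  rw [Finset.sum_eq_single s]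
  · simp
  · intro b _ hb; simp [hb]
  · simp

lemma payoff_pure_right {S : Type*} [Fintype S] [DecidableEq S]
    (A : S → S → ℝ) (x : S → ℝ) (s : S) :
    payoff A x (pureStrat s) = ∑ i, x i * A i s := by
  unfold payoff pureStrat
  apply Finset.sum_congr rfl
  intro i _
  rw [Finset.sum_eq_single s]
  · simp
  · intro b _ hb; simp [hb]
  · simp

lemma gU1_f_ge {n m : ℕ} (hn : 4 ≤ n) (φ : CNF3 n m) (j : GStrat n m) :
    (n : ℝ) - 1 ≤ gU1 φ (fStrat n m) j := by
  have h : (4 : ℝ) ≤ (n : ℝ) := by exact_mod_cast hn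
  rcases j with l | (l | (v | (c | u))) <;> simp [gU1, fStrat] <;> linarith

lemma gU2_f_ge {n m : ℕ} (hn : 4 ≤ n) (φ : CNF3 n m) (i : GStrat n m) :
    (n : ℝ) - 1 ≤ gU2 φ i (fStrat n m) := by
  have h : (4 : ℝ) ≤ (n : ℝ) := by exact_mod_cast hn
  rcases i with l | (l | (v | (c | u))) <;> simp [gU2, fStrat] <;> linarith

theorem stmt19 {n m : ℕ} (hn : 4 ≤ n) (φ : CNF3 n m)
    (ε : ℝ) (hε : ε = 1 / (2 * (n : ℝ) ^ 3)) :
    ∀ x y : GStrat n m → ℝ, IsEpsNash (gU1 φ) (gU2 φ) x y ε →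
      (n : ℝ) - 1 - ε ≤ payoff (gU1 φ) x y ∧
      (n : ℝ) - 1 - ε ≤ payoff (gU2 φ) x y := by
  intro x y ⟨hx, hy, hR, hC⟩
  have h1 := hR (fStrat n m)
  have h2 := hC (fStrat n m)
  rw [payoff_pure_left] at h1
  rw [payoff_pure_right] at h2
  have b1 : (n : ℝ) - 1 ≤ ∑ j, y j * gU1 φ (fStrat n m) j := by
    calc (n : ℝ) - 1 = ∑ j, y j * ((n : ℝ) - 1) := by
          rw [← Finset.sum_mul, hy.2, one_mul]
      _ ≤ ∑ j, y j * gU1 φ (fStrat n m) j :=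
          Finset.sum_le_sum fun j _ =>
            mul_le_mul_of_nonneg_left (gU1_f_ge hn φ j) (hy.1 j)
  have b2 : (n : ℝ) - 1 ≤ ∑ i, x i * gU2 φ i (fStrat n m) := by
    calc (n : ℝ) - 1 = ∑ i, x i * ((n : ℝ) - 1) := by
          rw [← Finset.sum_mul, hx.2, one_mul]
      _ ≤ ∑ i, x i * gU2 φ i (fStrat n m) :=
          Finset.sum_le_sum fun i _ =>
            mul_le_mul_of_nonneg_left (gU2_f_ge hn φ i) (hx.1 i)
  constructor <;> linarith
end
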